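/- For every nonnegative integer g, the number of numerical semigroups with multiplicity 4 and genus g equals the number of triples (x,y,z) of positive integers with x + y + z = g + 6, x ≤ y ≤ z, x ≠ 1, y ≠ 2 and z ≠ 3 (i.e., the number of unordered partitions of g+6 into three parts whose i-th part is different from i). -/

import Mathlib

/-- A numerical semigroup: a subset of ℕ containing 0, closed under addition,
with finite complement. -/
def IsNumericalSemigroup (S : Set ℕ) : Prop :=
  0 ∈ S ∧ (∀ a ∈ S, ∀ b ∈ S, a + b ∈ S) ∧ Sᶜ.Finite

/-- The genus: the number of gaps of `S`. -/
noncomputable def nsGenus (S : Set ℕ) : ℕ := Sᶜ.ncard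

/-- The Frobenius number: the largest gap of `S`. -/
noncomputable def nsFrobenius (S : Set ℕ) : ℕ := sSup Sᶜ

/-- The multiplicity: the least positive element of `S`. -/
noncomputable def nsMultiplicity (S : Set ℕ) : ℕ := sInf {n | n ∈ S ∧ n ≠ 0}

/-- A minimal generator: a nonzero element of `S` that is not a sum of two
nonzero elements of `S`. -/
def IsMinimalGenerator (S : Set ℕ) (n : ℕ) : Prop :=
  n ∈ S ∧ n ≠ 0 ∧ ¬ ∃ a b, a ∈ S ∧ b ∈ S ∧ a ≠ 0 ∧ b ≠ 0 ∧ a + b = n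

/-- The embedding dimension: the number of minimal generators of `S`. -/
noncomputable def nsEmbDim (S : Set ℕ) : ℕ := {n | IsMinimalGenerator S n}.ncard

/-- The number of numerical semigroups with multiplicity `m` and genus `g`. -/
noncomputable def numSgps (m g : ℕ) : ℕ :=
  {S : Set ℕ | IsNumericalSemigroup S ∧ nsMultiplicity S = m ∧ nsGenus S = g}.ncard

namespace S18

open Finset

def Kf (g : ℕ) : Finset (ℕ × ℕ × ℕ) :=
  (range (g + 1) ×ˢ range (g + 1) ×ˢ range (g + 1)).filter fun p =>
    1 ≤ p.1 ∧ 1 ≤ p.2.1 ∧ 1 ≤ p.2.2 ∧ p.1 + p.2.1 + p.2.2 = g ∧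
    p.2.1 ≤ 2 * p.1 ∧ p.2.2 ≤ p.1 + p.2.1 ∧ p.1 ≤ p.2.1 + p.2.2 + 1 ∧
    p.2.1 ≤ 2 * p.2.2 + 1

lemma mem_Kf {g : ℕ} {p : ℕ × ℕ × ℕ} :
    p ∈ Kf g ↔ 1 ≤ p.1 ∧ 1 ≤ p.2.1 ∧ 1 ≤ p.2.2 ∧ p.1 + p.2.1 + p.2.2 = g ∧
      p.2.1 ≤ 2 * p.1 ∧ p.2.2 ≤ p.1 + p.2.1 ∧ p.1 ≤ p.2.1 + p.2.2 + 1 ∧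
      p.2.1 ≤ 2 * p.2.2 + 1 := by
  obtain ⟨a, b, c⟩ := p
  simp only [Kf, mem_filter, mem_product, mem_range]
  constructor
  · rintro ⟨-, h⟩; exact h
  · rintro h; refine ⟨⟨by omega, by omega, by omega⟩, h⟩

lemma mem_Kf' {g a b c : ℕ} :
    (a, b, c) ∈ Kf g ↔ 1 ≤ a ∧ 1 ≤ b ∧ 1 ≤ c ∧ a + b + c = g ∧
      b ≤ 2 * a ∧ c ≤ a + b ∧ a ≤ b + c + 1 ∧ b ≤ 2 * c + 1 := mem_Kf

def SgpOf (p : ℕ × ℕ × ℕ) : Set ℕ :=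
  {n | n % 4 = 0 ∨ (n % 4 = 1 ∧ 4 * p.1 + 1 ≤ n) ∨ (n % 4 = 2 ∧ 4 * p.2.1 + 2 ≤ n) ∨
    (n % 4 = 3 ∧ 4 * p.2.2 + 3 ≤ n)}

lemma sgp_isNS {p : ℕ × ℕ × ℕ}
    (hA : p.2.1 ≤ 2 * p.1) (hB : p.2.2 ≤ p.1 + p.2.1)
    (hC : p.1 ≤ p.2.1 + p.2.2 + 1) (hD : p.2.1 ≤ 2 * p.2.2 + 1) :
    IsNumericalSemigroup (SgpOf p) := by
  obtain ⟨x1, x2, x3⟩ := p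
  refine ⟨?_, ?_, ?_⟩
  · show 0 % 4 = 0 ∨ _
    left; rfl
  · intro a ha b hb
    simp only [SgpOf, Set.mem_setOf_eq] at ha hb ⊢
    simp only at ha hb hA hB hC hD ⊢
    omega
  · apply Set.Finite.subset (Set.finite_Iio (4 * x1 + 4 * x2 + 4 * x3 + 4))
    intro n hn
    simp only [Set.mem_compl_iff, SgpOf, Set.mem_setOf_eq] at hn
    simp only [Set.mem_Iio]
    omega

lemma sgp_mult {p : ℕ × ℕ × ℕ} (h1 : 1 ≤ p.1) (h2 : 1 ≤ p.2.1) (h3 : 1 ≤ p.2.2) :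
    nsMultiplicity (SgpOf p) = 4 := by
  obtain ⟨x1, x2, x3⟩ := p
  simp only at h1 h2 h3
  have h4 : (4 : ℕ) ∈ {n | n ∈ SgpOf (x1, x2, x3) ∧ n ≠ 0} := by
    refine ⟨Or.inl (by norm_num), by norm_num⟩
  unfold nsMultiplicity
  apply le_antisymm (Nat.sInf_le h4)
  apply le_csInf ⟨4, h4⟩
  rintro b ⟨hb, hb0⟩
  simp only [SgpOf, Set.mem_setOf_eq] at hb
  omega

lemma sgp_genus {p : ℕ × ℕ × ℕ} :
    nsGenus (SgpOf p) = p.1 + p.2.1 + p.2.2 := by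
  obtain ⟨x1, x2, x3⟩ := p
  have hset : (SgpOf (x1, x2, x3))ᶜ =
      ↑((((range x1).image fun k => 4 * k + 1) ∪ ((range x2).image fun k => 4 * k + 2)) ∪
        ((range x3).image fun k => 4 * k + 3)) := by
    ext n
    simp only [Set.mem_compl_iff, SgpOf, Set.mem_setOf_eq, Finset.coe_union, Set.mem_union,
      Finset.coe_image, Set.mem_image, Finset.mem_coe, Finset.mem_range]
    constructor
    · intro h
      rcases (show n % 4 = 1 ∧ n < 4 * x1 + 1 ∨ n % 4 = 2 ∧ n < 4 * x2 + 2 ∨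
          n % 4 = 3 ∧ n < 4 * x3 + 3 by omega) with ⟨e1, e2⟩ | ⟨e1, e2⟩ | ⟨e1, e2⟩
      · exact Or.inl (Or.inl ⟨n / 4, by omega, by omega⟩)
      · exact Or.inl (Or.inr ⟨n / 4, by omega, by omega⟩)
      · exact Or.inr ⟨n / 4, by omega, by omega⟩
    · rintro ((⟨k, hk, rfl⟩ | ⟨k, hk, rfl⟩) | ⟨k, hk, rfl⟩) <;> omega
  unfold nsGenus
  rw [hset, Set.ncard_coe_finset]
  have d1 : Disjoint ((range x1).image fun k => 4 * k + 1)
      ((range x2).image fun k => 4 * k + 2) := by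
    rw [Finset.disjoint_left]
    rintro a ha hb
    simp only [Finset.mem_image, Finset.mem_range] at ha hb
    obtain ⟨k, -, rfl⟩ := ha
    obtain ⟨l, -, hl⟩ := hb
    omega
  have d2 : Disjoint (((range x1).image fun k => 4 * k + 1) ∪
      ((range x2).image fun k => 4 * k + 2)) ((range x3).image fun k => 4 * k + 3) := by
    rw [Finset.disjoint_left]
    rintro a ha hb
    simp only [Finset.mem_union, Finset.mem_image, Finset.mem_range] at ha hb
    obtain ⟨l, -, hl⟩ := hb
    rcases ha with ⟨k, -, rfl⟩ | ⟨k, -, rfl⟩ <;> omega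
  rw [Finset.card_union_of_disjoint d2, Finset.card_union_of_disjoint d1]
  rw [Finset.card_image_of_injective _ (fun a b h => by omega),
    Finset.card_image_of_injective _ (fun a b h => by omega),
    Finset.card_image_of_injective _ (fun a b h => by omega)]
  simp

lemma sgp_injOn {g : ℕ} : Set.InjOn SgpOf ↑(Kf g) := by
  rintro ⟨a, b, c⟩ ha ⟨a', b', c'⟩ hb h
  have h1 := Set.ext_iff.mp h (4 * a + 1)
  have h2 := Set.ext_iff.mp h (4 * a' + 1)
  have h3 := Set.ext_iff.mp h (4 * b + 2)
  have h4 := Set.ext_iff.mp h (4 * b' + 2)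
  have h5 := Set.ext_iff.mp h (4 * c + 3)
  have h6 := Set.ext_iff.mp h (4 * c' + 3)
  simp only [SgpOf, Set.mem_setOf_eq] at h1 h2 h3 h4 h5 h6
  simp only [Prod.mk.injEq]
  omega

lemma sgp_surj {g : ℕ} {S : Set ℕ} (hS : IsNumericalSemigroup S)
    (hm : nsMultiplicity S = 4) (hg : nsGenus S = g) :
    ∃ p ∈ Kf g, SgpOf p = S := by
  obtain ⟨h0, hadd, hfin⟩ := hS
  obtain ⟨N, hN⟩ := hfin.bddAbove
  have hbig : ∀ n, N < n → n ∈ S := by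
    intro n hn
    by_contra hc
    have := hN hc
    omega
  unfold nsMultiplicity at hm
  have hMne : {n | n ∈ S ∧ n ≠ 0}.Nonempty := ⟨N + 1, hbig _ (by omega), by omega⟩
  have h4mem := Nat.sInf_mem hMne
  rw [hm] at h4mem
  have h4S : (4 : ℕ) ∈ S := h4mem.1
  have hmul : ∀ k, 4 * k ∈ S := by
    intro k
    induction k with
    | zero => simpa using h0
    | succ k ih =>
      have h' := hadd _ ih 4 h4S
      have e : 4 * (k + 1) = 4 * k + 4 := by ring
      rw [e]; exact h'
  have hge : ∀ n, n ∈ S → n ≠ 0 → 4 ≤ n := by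
    intro n hn hn0
    have := Nat.sInf_le (show n ∈ {n | n ∈ S ∧ n ≠ 0} from ⟨hn, hn0⟩)
    omega
  -- the three minimal elements in residue classes
  have ne1 : {n | n ∈ S ∧ n % 4 = 1}.Nonempty := ⟨4 * (N + 1) + 1, hbig _ (by omega), by omega⟩
  have ne2 : {n | n ∈ S ∧ n % 4 = 2}.Nonempty := ⟨4 * (N + 1) + 2, hbig _ (by omega), by omega⟩
  have ne3 : {n | n ∈ S ∧ n % 4 = 3}.Nonempty := ⟨4 * (N + 1) + 3, hbig _ (by omega), by omega⟩
  set w1 := sInf {n | n ∈ S ∧ n % 4 = 1} with hw1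
  set w2 := sInf {n | n ∈ S ∧ n % 4 = 2} with hw2
  set w3 := sInf {n | n ∈ S ∧ n % 4 = 3} with hw3
  obtain ⟨hw1S, hw1m⟩ := Nat.sInf_mem ne1
  obtain ⟨hw2S, hw2m⟩ := Nat.sInf_mem ne2
  obtain ⟨hw3S, hw3m⟩ := Nat.sInf_mem ne3
  have hle1 : ∀ n, n ∈ S → n % 4 = 1 → w1 ≤ n := fun n hn hr => Nat.sInf_le ⟨hn, hr⟩
  have hle2 : ∀ n, n ∈ S → n % 4 = 2 → w2 ≤ n := fun n hn hr => Nat.sInf_le ⟨hn, hr⟩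
  have hle3 : ∀ n, n ∈ S → n % 4 = 3 → w3 ≤ n := fun n hn hr => Nat.sInf_le ⟨hn, hr⟩
  have hw1ge : 5 ≤ w1 := by have := hge w1 hw1S (by omega); omega
  have hw2ge : 6 ≤ w2 := by have := hge w2 hw2S (by omega); omega
  have hw3ge : 7 ≤ w3 := by have := hge w3 hw3S (by omega); omega
  -- Kunz inequalities
  have k11 : w2 ≤ w1 + w1 := hle2 _ (hadd _ hw1S _ hw1S) (by omega)
  have k12 : w3 ≤ w1 + w2 := hle3 _ (hadd _ hw1S _ hw2S) (by omega)
  have k23 : w1 ≤ w2 + w3 := hle1 _ (hadd _ hw2S _ hw3S) (by omega)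
  have k33 : w2 ≤ w3 + w3 := hle2 _ (hadd _ hw3S _ hw3S) (by omega)
  have hSeq : SgpOf (w1 / 4, w2 / 4, w3 / 4) = S := by
    ext n
    simp only [SgpOf, Set.mem_setOf_eq]
    constructor
    · rintro (hr | ⟨hr, hn⟩ | ⟨hr, hn⟩ | ⟨hr, hn⟩)
      · have e : 4 * (n / 4) = n := by omega
        rw [← e]; exact hmul _
      · have e : n = w1 + 4 * ((n - w1) / 4) := by omega
        rw [e]; exact hadd _ hw1S _ (hmul _)
      · have e : n = w2 + 4 * ((n - w2) / 4) := by omega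
        rw [e]; exact hadd _ hw2S _ (hmul _)
      · have e : n = w3 + 4 * ((n - w3) / 4) := by omega
        rw [e]; exact hadd _ hw3S _ (hmul _)
    · intro hn
      rcases (show n % 4 = 0 ∨ n % 4 = 1 ∨ n % 4 = 2 ∨ n % 4 = 3 by omega) with hr | hr | hr | hr
      · exact Or.inl hr
      · exact Or.inr (Or.inl ⟨hr, by have := hle1 n hn hr; omega⟩)
      · exact Or.inr (Or.inr (Or.inl ⟨hr, by have := hle2 n hn hr; omega⟩))
      · exact Or.inr (Or.inr (Or.inr ⟨hr, by have := hle3 n hn hr; omega⟩))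
  refine ⟨(w1 / 4, w2 / 4, w3 / 4), ?_, hSeq⟩
  rw [mem_Kf']
  have hgen : nsGenus (SgpOf (w1 / 4, w2 / 4, w3 / 4)) = w1 / 4 + w2 / 4 + w3 / 4 :=
    sgp_genus
  rw [hSeq, hg] at hgen
  omega

def Pf (n : ℕ) : Finset (ℕ × ℕ × ℕ) :=
  (range (n + 1) ×ˢ range (n + 1) ×ˢ range (n + 1)).filter fun p =>
    0 < p.1 ∧ 0 < p.2.1 ∧ 0 < p.2.2 ∧ p.1 ≤ p.2.1 ∧ p.2.1 ≤ p.2.2 ∧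
    p.1 + p.2.1 + p.2.2 = n ∧ p.1 ≠ 1 ∧ p.2.1 ≠ 2 ∧ p.2.2 ≠ 3

lemma mem_Pf {n : ℕ} {p : ℕ × ℕ × ℕ} :
    p ∈ Pf n ↔ 0 < p.1 ∧ 0 < p.2.1 ∧ 0 < p.2.2 ∧ p.1 ≤ p.2.1 ∧ p.2.1 ≤ p.2.2 ∧
      p.1 + p.2.1 + p.2.2 = n ∧ p.1 ≠ 1 ∧ p.2.1 ≠ 2 ∧ p.2.2 ≠ 3 := by
  obtain ⟨a, b, c⟩ := p
  simp only [Pf, mem_filter, mem_product, mem_range]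
  constructor
  · rintro ⟨-, h⟩; exact h
  · rintro h; refine ⟨⟨by omega, by omega, by omega⟩, h⟩

lemma fiberK (g t : ℕ) (ht : 1 ≤ t) :
    ((Kf g).filter fun p => p.2.1 = t).card =
      min (g - t - 1) (min ((g + 1) / 2) ((2 * g + 1 - 3 * t) / 2)) + 1 -
        max 1 (max ((t + 1) / 2) ((g + 1 - 2 * t) / 2)) := by
  rw [← Nat.card_Icc]
  apply Finset.card_bij (fun p _ => p.1)
  · rintro ⟨a, b, c⟩ hp
    simp only [mem_filter, mem_Kf] at hp
    simp only [mem_Icc, max_le_iff, le_min_iff]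
    omega
  · rintro ⟨a, b, c⟩ hp ⟨a', b', c'⟩ hp' h
    simp only [mem_filter, mem_Kf] at hp hp'
    simp only at h
    simp only [Prod.mk.injEq]
    omega
  · intro x hx
    simp only [mem_Icc, max_le_iff, le_min_iff] at hx
    refine ⟨⟨x, t, g - x - t⟩, ?_, rfl⟩
    simp only [mem_filter, mem_Kf]
    refine ⟨⟨?_, ?_, ?_, ?_, ?_, ?_, ?_, ?_⟩, trivial⟩ <;> omega

lemma fiberP (g t : ℕ) (ht : 1 ≤ t) :
    ((Pf (g + 6)).filter fun p => p.2.1 = t + 2).card =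
      min (t + 2) (min (g + 2 - 2 * t) (g - t)) + 1 - 2 := by
  rw [← Nat.card_Icc]
  apply Finset.card_bij (fun p _ => p.1)
  · rintro ⟨a, b, c⟩ hp
    simp only [mem_filter, mem_Pf] at hp
    simp only [mem_Icc, max_le_iff, le_min_iff]
    omega
  · rintro ⟨a, b, c⟩ hp ⟨a', b', c'⟩ hp' h
    simp only [mem_filter, mem_Pf] at hp hp'
    simp only at h
    simp only [Prod.mk.injEq]
    omega
  · intro x hx
    simp only [mem_Icc, max_le_iff, le_min_iff] at hx
    refine ⟨⟨x, t + 2, g + 4 - t - x⟩, ?_, rfl⟩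
    simp only [mem_filter, mem_Pf]
    refine ⟨⟨?_, ?_, ?_, ?_, ?_, ?_, ?_, ?_, ?_⟩, trivial⟩ <;> omega

set_option maxHeartbeats 1000000 in
lemma card_Kf_eq (g : ℕ) : (Kf g).card = (Pf (g + 6)).card := by
  have hK : (Kf g).card = ∑ t ∈ range (g + 7), ((Kf g).filter fun p => p.2.1 = t).card := by
    apply Finset.card_eq_sum_card_fiberwise
    intro p hp
    rw [Finset.mem_coe, mem_Kf] at hp
    simp only [Finset.mem_coe, mem_range]
    omega
  have hP : (Pf (g + 6)).card =
      ∑ t ∈ range (g + 9), ((Pf (g + 6)).filter fun p => p.2.1 = t).card := by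
    apply Finset.card_eq_sum_card_fiberwise
    intro p hp
    rw [Finset.mem_coe, mem_Pf] at hp
    simp only [Finset.mem_coe, mem_range]
    omega
  rw [hK, hP]
  rw [Finset.sum_range_succ' _ (g + 8), Finset.sum_range_succ' _ (g + 7)]
  have h0 : ((Pf (g + 6)).filter fun p => p.2.1 = 0).card = 0 := by
    rw [Finset.card_eq_zero, Finset.filter_eq_empty_iff]
    rintro p hp
    rw [mem_Pf] at hp
    omega
  have h1 : ((Pf (g + 6)).filter fun p => p.2.1 = 0 + 1).card = 0 := by
    rw [Finset.card_eq_zero, Finset.filter_eq_empty_iff]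
    rintro p hp
    rw [mem_Pf] at hp
    omega
  rw [h0, h1]
  simp only [add_zero]
  apply Finset.sum_congr rfl
  intro t _
  rcases Nat.eq_zero_or_pos t with rfl | ht
  · have hk0 : ((Kf g).filter fun p => p.2.1 = 0).card = 0 := by
      rw [Finset.card_eq_zero, Finset.filter_eq_empty_iff]
      rintro p hp
      rw [mem_Kf] at hp
      omega
    have hp2 : ((Pf (g + 6)).filter fun p => p.2.1 = 0 + 1 + 1).card = 0 := by
      rw [Finset.card_eq_zero, Finset.filter_eq_empty_iff]
      rintro p hp
      rw [mem_Pf] at hp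
      omega
    rw [hk0, hp2]
  · have := fiberK g t ht
    have h2 : t + 1 + 1 = t + 2 := by omega
    rw [this, h2, fiberP g t ht]
    omega


lemma setEq (g : ℕ) :
    {S : Set ℕ | IsNumericalSemigroup S ∧ nsMultiplicity S = 4 ∧ nsGenus S = g} =
      SgpOf '' ↑(Kf g) := by
  ext S
  simp only [Set.mem_setOf_eq, Set.mem_image, Finset.mem_coe]
  constructor
  · rintro ⟨h1, h2, h3⟩
    obtain ⟨p, hp, hps⟩ := sgp_surj h1 h2 h3
    exact ⟨p, hp, hps⟩
  · rintro ⟨p, hp, rfl⟩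
    rw [mem_Kf] at hp
    refine ⟨sgp_isNS hp.2.2.2.2.1 hp.2.2.2.2.2.1 hp.2.2.2.2.2.2.1 hp.2.2.2.2.2.2.2,
      sgp_mult hp.1 hp.2.1 hp.2.2.1, ?_⟩
    rw [sgp_genus]
    omega

end S18

/-- The number of numerical semigroups with multiplicity 4 and
genus `g` equals the number of triples `(x,y,z)` of positive integers with
`x + y + z = g + 6`, `x ≤ y ≤ z`, `x ≠ 1`, `y ≠ 2` and `z ≠ 3`. -/
theorem statement18 (g : ℕ) :
    numSgps 4 g =
      {p : ℕ × ℕ × ℕ | 0 < p.1 ∧ 0 < p.2.1 ∧ 0 < p.2.2 ∧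
        p.1 ≤ p.2.1 ∧ p.2.1 ≤ p.2.2 ∧ p.1 + p.2.1 + p.2.2 = g + 6 ∧
        p.1 ≠ 1 ∧ p.2.1 ≠ 2 ∧ p.2.2 ≠ 3}.ncard := by
  have e1 : numSgps 4 g = (S18.Kf g).card := by
    unfold numSgps
    rw [S18.setEq, Set.ncard_image_of_injOn S18.sgp_injOn, Set.ncard_coe_finset]
  have hPset : {p : ℕ × ℕ × ℕ | 0 < p.1 ∧ 0 < p.2.1 ∧ 0 < p.2.2 ∧
      p.1 ≤ p.2.1 ∧ p.2.1 ≤ p.2.2 ∧ p.1 + p.2.1 + p.2.2 = g + 6 ∧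
      p.1 ≠ 1 ∧ p.2.1 ≠ 2 ∧ p.2.2 ≠ 3} = ↑(S18.Pf (g + 6)) := by
    ext p
    simp only [Set.mem_setOf_eq, Finset.mem_coe, S18.mem_Pf]
  rw [e1, S18.card_Kf_eq, hPset, Set.ncard_coe_finset]
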